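/- Let f₀ be analytic on the unit disk with f₀(0) = 0 and f₀'(z) = (1+z)²/(1−z)³, and let g₀(z) = z/(1−z)². Then |f₀'(z)/g₀'(z) − 1| = |z| < 1 on 𝔻, 1 + z f₀''(z)/f₀'(z) = (1 + 5z)/(1−z²), and at z = −r with r = 5 − 2√6 one has |z f₀''(z)/f₀'(z)| = Re(1 + z f₀''(z)/f₀'(z)). -/

import Mathlib

open Metric Real

private lemma ball_abs {z : ℂ} (hz : z ∈ ball (0 : ℂ) 1) : ‖z‖ < 1 := by
  simpa [mem_ball, Complex.dist_eq] using hz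

private lemma ball_ne_sub {z : ℂ} (hz : z ∈ ball (0 : ℂ) 1) : (1 : ℂ) - z ≠ 0 := by
  intro h
  have h1 : z = 1 := by linear_combination -h
  have := ball_abs hz
  simp [h1] at this

private lemma ball_ne_add {z : ℂ} (hz : z ∈ ball (0 : ℂ) 1) : (1 : ℂ) + z ≠ 0 := by
  intro h
  have h1 : z = -1 := by linear_combination h
  have := ball_abs hz
  simp [h1] at this

private lemma hasDerivAt_F {z : ℂ} (h : (1 : ℂ) - z ≠ 0) :
    HasDerivAt (fun w : ℂ => (1 + w) ^ 2 / (1 - w) ^ 3)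
      ((1 + z) * (5 + z) / (1 - z) ^ 4) z := by
  have hnum : HasDerivAt (fun w : ℂ => (1 + w) ^ 2) (2 * (1 + z)) z := by
    have := ((hasDerivAt_id z).const_add 1).fun_pow 2
    simpa using this
  have hden : HasDerivAt (fun w : ℂ => (1 - w) ^ 3) (-(3 * (1 - z) ^ 2)) z := by
    have := ((hasDerivAt_id z).const_sub 1).fun_pow 3
    simpa [mul_comm] using this
  have h3 : ((1 : ℂ) - z) ^ 3 ≠ 0 := pow_ne_zero _ h
  have := hnum.fun_div hden h3
  refine this.congr_deriv ?_
  field_simp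
  ring

private lemma hasDerivAt_G {z : ℂ} (h : (1 : ℂ) - z ≠ 0) :
    HasDerivAt (fun w : ℂ => w / (1 - w) ^ 2) ((1 + z) / (1 - z) ^ 3) z := by
  have hden : HasDerivAt (fun w : ℂ => (1 - w) ^ 2) (-(2 * (1 - z))) z := by
    have := ((hasDerivAt_id z).const_sub 1).fun_pow 2
    simpa [mul_comm] using this
  have h2 : ((1 : ℂ) - z) ^ 2 ≠ 0 := pow_ne_zero _ h
  have := (hasDerivAt_id' z).fun_div hden h2
  refine this.congr_deriv ?_
  field_simp
  ring

theorem F6_uniform_convexity_extremal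
    (f₀ g₀ : ℂ → ℂ)
    (hf₀0 : f₀ 0 = 0)
    (hf₀' : ∀ z ∈ ball (0 : ℂ) 1, HasDerivAt f₀ ((1 + z) ^ 2 / (1 - z) ^ 3) z)
    (hg₀ : ∀ z : ℂ, g₀ z = z / (1 - z) ^ 2) :
    (∀ z ∈ ball (0 : ℂ) 1,
      ‖deriv f₀ z / deriv g₀ z - 1‖ = ‖z‖ ∧ ‖z‖ < 1) ∧
    (∀ z ∈ ball (0 : ℂ) 1,
      1 + z * deriv (deriv f₀) z / deriv f₀ z = (1 + 5 * z) / (1 - z ^ 2)) ∧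
    (let r : ℝ := 5 - 2 * Real.sqrt 6
     let z : ℂ := -(r : ℂ)
     ‖z * deriv (deriv f₀) z / deriv f₀ z‖ =
       (1 + z * deriv (deriv f₀) z / deriv f₀ z).re) := by
  -- deriv f₀ on the ball
  have hD1 : ∀ z ∈ ball (0 : ℂ) 1, deriv f₀ z = (1 + z) ^ 2 / (1 - z) ^ 3 :=
    fun z hz => (hf₀' z hz).deriv
  -- second derivative on the ball
  have hD2 : ∀ z ∈ ball (0 : ℂ) 1,
      deriv (deriv f₀) z = (1 + z) * (5 + z) / (1 - z) ^ 4 := by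
    intro z hz
    have hev : deriv f₀ =ᶠ[nhds z] fun w => (1 + w) ^ 2 / (1 - w) ^ 3 :=
      Filter.eventually_of_mem (isOpen_ball.mem_nhds hz) (fun w hw => hD1 w hw)
    rw [hev.deriv_eq]
    exact (hasDerivAt_F (ball_ne_sub hz)).deriv
  have hg' : ∀ z : ℂ, (1 : ℂ) - z ≠ 0 → deriv g₀ z = (1 + z) / (1 - z) ^ 3 := by
    intro z h
    have : g₀ = fun w : ℂ => w / (1 - w) ^ 2 := funext hg₀
    rw [this]
    exact (hasDerivAt_G h).deriv
  -- key quotient formula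
  have hQ : ∀ z ∈ ball (0 : ℂ) 1,
      1 + z * deriv (deriv f₀) z / deriv f₀ z = (1 + 5 * z) / (1 - z ^ 2) := by
    intro z hz
    have hs := ball_ne_sub hz
    have ha := ball_ne_add hz
    rw [hD1 z hz, hD2 z hz]
    have h2 : (1 : ℂ) - z ^ 2 ≠ 0 := by
      intro h
      apply hs
      have : (1 - z) * (1 + z) = 0 := by linear_combination h
      rcases mul_eq_zero.1 this with h' | h'
      · exact h'
      · exact absurd h' ha
    field_simp
    ring
  refine ⟨?_, hQ, ?_⟩
  · intro z hz
    refine ⟨?_, ball_abs hz⟩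
    have hs := ball_ne_sub hz
    have ha := ball_ne_add hz
    rw [hD1 z hz, hg' z hs]
    congr 1
    field_simp
    ring
  · intro r z
    have hz_def : z = -(r : ℂ) := rfl
    have hr_eq : r = 5 - 2 * Real.sqrt 6 := rfl
    clear_value z r
    subst hz_def
    have h6 : Real.sqrt 6 ^ 2 = 6 := Real.sq_sqrt (by norm_num)
    have h6n : 0 ≤ Real.sqrt 6 := Real.sqrt_nonneg 6
    have hr0 : 0 < r := by rw [hr_eq]; nlinarith
    have hr1 : r < 1 := by rw [hr_eq]; nlinarith
    have hkey : r ^ 2 - 10 * r + 1 = 0 := by rw [hr_eq]; nlinarith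
    clear hr_eq
    have hzball : -(r : ℂ) ∈ ball (0 : ℂ) 1 := by
      simp only [mem_ball, Complex.dist_eq, sub_zero]
      rw [norm_neg, Complex.norm_real, Real.norm_eq_abs, abs_of_pos hr0]
      exact hr1
    have hrc1 : (1 : ℂ) + (r : ℂ) ≠ 0 := by
      simpa [sub_neg_eq_add] using ball_ne_sub hzball
    have hrc2 : (1 : ℂ) - (r : ℂ) ≠ 0 := by
      have := ball_ne_add hzball
      intro h
      apply this
      linear_combination h
    have hrc3 : (1 : ℂ) - (r : ℂ) ^ 2 ≠ 0 := by
      intro h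
      apply hrc2
      rcases mul_eq_zero.1 (show ((1 : ℂ) - r) * (1 + r) = 0 by linear_combination h) with h' | h'
      · exact h'
      · exact absurd h' hrc1
    have hval : -(r : ℂ) * deriv (deriv f₀) (-(r : ℂ)) / deriv f₀ (-(r : ℂ)) =
        ((-r * (5 - r) / (1 - r ^ 2) : ℝ) : ℂ) := by
      rw [hD2 _ hzball, hD1 _ hzball]
      have e1 : (1 : ℂ) - -(r : ℂ) ≠ 0 := by
        intro h; apply hrc1; linear_combination h
      have e2 : (1 : ℂ) + -(r : ℂ) ≠ 0 := by
        intro h; apply hrc2; linear_combination h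
      push_cast
      field_simp
      ring
    rw [hQ _ hzball, hval]
    have hrhs : ((1 : ℂ) + 5 * -(r : ℂ)) / (1 - (-(r : ℂ)) ^ 2) =
        (((1 - 5 * r) / (1 - r ^ 2) : ℝ) : ℂ) := by
      push_cast
      ring
    rw [hrhs, Complex.norm_real, Real.norm_eq_abs, Complex.ofReal_re]
    have hvneg : -r * (5 - r) / (1 - r ^ 2) ≤ 0 := by
      apply div_nonpos_of_nonpos_of_nonneg
      · nlinarith
      · nlinarith
    have hd : (0 : ℝ) < 1 - r ^ 2 := by nlinarith
    rw [abs_of_nonpos hvneg, ← neg_div, div_eq_div_iff hd.ne' hd.ne']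
    linear_combination (-(1 - r ^ 2)) * hkey
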